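/- For d = 1, the characteristics Y^k solving ∂_t Y^k_t = −Y^k_t / ((Y^k_t)² + 1/k)^{1/2} with Y^k_0 = y_0 converge, as k → ∞, pointwise for each t ∈ [0, |y_0|] to Y_t(y_0) = y_0 − sign(y_0) t. -/

import Mathlib

open Filter

lemma aux14 (y₀ : ℝ) (hy : 0 < y₀) (ε : ℝ) (hε : 0 < ε) (Y : ℝ → ℝ) (h0 : Y 0 = y₀)
    (hD : ∀ t, HasDerivAt Y (-(Y t) / Real.sqrt ((Y t) ^ 2 + ε)) t) :
    ∀ t ∈ Set.Icc (0:ℝ) y₀, y₀ - t ≤ Y t ∧ Y t ≤ y₀ - t + 5 * Real.sqrt ε := by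
  set s := Real.sqrt ε with hs
  have spos : 0 < s := Real.sqrt_pos.mpr hε
  have hs2 : s ^ 2 = ε := Real.sq_sqrt hε.le
  have hvpos : ∀ t, 0 < Real.sqrt ((Y t) ^ 2 + ε) := fun t =>
    Real.sqrt_pos.mpr (by positivity)
  have hle : ∀ t, Y t ≤ Real.sqrt ((Y t) ^ 2 + ε) := fun t => by
    calc Y t ≤ |Y t| := le_abs_self _
    _ = Real.sqrt ((Y t) ^ 2) := (Real.sqrt_sq_eq_abs _).symm
    _ ≤ Real.sqrt ((Y t) ^ 2 + ε) := Real.sqrt_le_sqrt (by linarith)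
  have hsle : ∀ t, s ≤ Real.sqrt ((Y t) ^ 2 + ε) := fun t =>
    Real.sqrt_le_sqrt (by nlinarith [sq_nonneg (Y t)])
  -- lower bound: Y t + t is monotone
  have hgd : ∀ t, HasDerivAt (fun u => Y u + u)
      (-(Y t) / Real.sqrt ((Y t) ^ 2 + ε) + 1) t := fun t =>
    (hD t).add (hasDerivAt_id t)
  have hmono : Monotone (fun u => Y u + u) := by
    apply monotone_of_deriv_nonneg
    · exact fun t => ((hgd t).differentiableAt)
    · intro t
      rw [(hgd t).deriv]
      have h1 : Y t / Real.sqrt ((Y t) ^ 2 + ε) ≤ 1 :=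
        (div_le_one (hvpos t)).mpr (hle t)
      have h2 : -(Y t) / Real.sqrt ((Y t) ^ 2 + ε)
          = -(Y t / Real.sqrt ((Y t) ^ 2 + ε)) := by ring
      rw [h2]; linarith
  have hlow : ∀ t, 0 ≤ t → y₀ - t ≤ Y t := by
    intro t ht
    have := hmono ht
    simp only [h0] at this
    linarith [this]
  intro t ht
  obtain ⟨ht0, hty⟩ := ht
  refine ⟨hlow t ht0, ?_⟩
  -- upper bound via v = sqrt (Y² + ε)
  set v : ℝ → ℝ := fun u => Real.sqrt ((Y u) ^ 2 + ε) with hv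
  have hvd : ∀ u, HasDerivAt v (-(Y u) ^ 2 / ((Y u) ^ 2 + ε)) u := by
    intro u
    have hinner : HasDerivAt (fun w => (Y w) ^ 2 + ε)
        (2 * Y u ^ 1 * (-(Y u) / Real.sqrt ((Y u) ^ 2 + ε))) u :=
      ((hD u).pow 2).add_const ε
    have hne : (Y u) ^ 2 + ε ≠ 0 := by positivity
    have hmain := (Real.hasDerivAt_sqrt hne).comp u hinner
    refine (hmain.congr_deriv ?_).congr_of_eventuallyEq (Filter.Eventually.of_forall fun _ => rfl); symm
    have h2 : Real.sqrt ((Y u) ^ 2 + ε) ^ 2 = (Y u) ^ 2 + ε := Real.sq_sqrt (by positivity)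
    have h3 := (hvpos u).ne'
    field_simp
    nlinarith [h2]
  set G : ℝ → ℝ := fun u => v u + u - 4 * ε / (y₀ - u + s) with hG
  have hGd : ∀ u, u < y₀ + s → HasDerivAt G
      (ε / ((Y u) ^ 2 + ε) - 4 * ε / (y₀ - u + s) ^ 2) u := by
    intro u hu
    have hden : 0 < y₀ - u + s := by linarith
    have hdd : HasDerivAt (fun w => y₀ - w + s) (-1) u := by
      have := ((hasDerivAt_id u).const_sub y₀).add_const s
      simpa using this
    have hq := (hasDerivAt_const u (4 * ε)).div hdd hden.ne'
    have hmain := ((hvd u).add (hasDerivAt_id u)).sub hq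
    refine (hmain.congr_deriv ?_).congr_of_eventuallyEq (Filter.Eventually.of_forall fun _ => rfl); symm
    have hne : (Y u) ^ 2 + ε ≠ 0 := by positivity
    field_simp
    ring
  -- G is antitone on [0, y₀]
  have hanti : AntitoneOn G (Set.Icc 0 y₀) := by
    apply antitoneOn_of_deriv_nonpos (convex_Icc 0 y₀)
    · intro u hu
      exact ((hGd u (by rcases hu with ⟨_, h⟩; linarith)).continuousAt).continuousWithinAt
    · rw [interior_Icc]
      intro u hu
      exact ((hGd u (by rcases hu with ⟨_, h⟩; linarith)).differentiableAt).differentiableWithinAt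
    · rw [interior_Icc]
      intro u hu
      obtain ⟨hu0, huy⟩ := hu
      rw [(hGd u (by linarith)).deriv]
      have hden : 0 < y₀ - u + s := by linarith
      have hvu := hvpos u
      have h2v : y₀ - u + s ≤ 2 * v u := by
        have h1 : y₀ - u ≤ v u := le_trans (hlow u hu0.le) (hle u)
        have h2 : s ≤ v u := hsle u
        linarith
      have hv2 : (v u) ^ 2 = (Y u) ^ 2 + ε := Real.sq_sqrt (by positivity)
      rw [sub_nonpos, div_le_div_iff₀ (by positivity) (by positivity)]
      have hsq : (y₀ - u + s) ^ 2 ≤ (2 * v u) ^ 2 := pow_le_pow_left₀ hden.le h2v 2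
      nlinarith [mul_le_mul_of_nonneg_left hsq hε.le, hv2]
  have hG0 : G t ≤ G 0 := hanti ⟨le_refl 0, hy.le⟩ ⟨ht0, hty⟩ ht0
  have hv0 : v 0 ≤ y₀ + s := by
    have : v 0 = Real.sqrt (y₀ ^ 2 + ε) := by simp [hv, h0]
    rw [this]
    have h1 : y₀ ^ 2 + ε ≤ (y₀ + s) ^ 2 := by nlinarith
    calc Real.sqrt (y₀ ^ 2 + ε) ≤ Real.sqrt ((y₀ + s) ^ 2) := Real.sqrt_le_sqrt h1
    _ = y₀ + s := Real.sqrt_sq (by positivity)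
  have hdent : 0 < y₀ - t + s := by linarith
  have hΦt : 4 * ε / (y₀ - t + s) ≤ 4 * s := by
    have h1 : 4 * ε / (y₀ - t + s) ≤ 4 * ε / s :=
      div_le_div_of_nonneg_left (by positivity) spos (by linarith)
    have h2 : 4 * ε / s = 4 * s := by
      rw [eq_comm, eq_div_iff spos.ne']; nlinarith
    linarith
  have hΦ0 : 0 ≤ 4 * ε / (y₀ + s) := by positivity
  have hGt : G t = v t + t - 4 * ε / (y₀ - t + s) := rfl
  have hG0' : G 0 = v 0 + 0 - 4 * ε / (y₀ - 0 + s) := rfl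
  have hfinal : v t ≤ y₀ + s - t + 4 * s := by
    rw [hGt, hG0'] at hG0
    simp only [sub_zero, add_zero] at hG0
    linarith
  calc Y t ≤ v t := hle t
  _ ≤ y₀ - t + 5 * s := by linarith

/-- The characteristics `Yᵏ` of the regularised Newtonian field in 1d,
`∂ₜ Yᵏ = −Yᵏ/((Yᵏ)² + 1/k)^{1/2}`, `Yᵏ(0) = y₀ ≠ 0`, converge pointwise for each
`t ∈ [0, |y₀|]` to `Y_t(y₀) = y₀ − sign(y₀) t`. -/
theorem stmt14 (y₀ : ℝ) (hy₀ : y₀ ≠ 0) (Y : ℕ → ℝ → ℝ)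
    (hY0 : ∀ k : ℕ, 1 ≤ k → Y k 0 = y₀)
    (hODE : ∀ k : ℕ, 1 ≤ k → ∀ t : ℝ,
      HasDerivAt (Y k) (-(Y k t) / Real.sqrt ((Y k t) ^ 2 + 1 / (k : ℝ))) t) :
    ∀ t ∈ Set.Icc (0 : ℝ) |y₀|,
      Tendsto (fun k : ℕ => Y k t) atTop (nhds (y₀ - Real.sign y₀ * t)) := by
  intro t ht
  have hsqrt0 : Tendsto (fun k : ℕ => Real.sqrt (1 / (k : ℝ))) atTop (nhds 0) := by
    have h1 : Tendsto (fun k : ℕ => (1 : ℝ) / k) atTop (nhds 0) :=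
      tendsto_one_div_atTop_nhds_zero_nat
    have h2 := (Real.continuous_sqrt.tendsto 0).comp h1
    rw [Real.sqrt_zero] at h2
    exact h2
  rcases lt_or_gt_of_ne hy₀ with hneg | hpos
  · -- y₀ < 0
    have habs : |y₀| = -y₀ := abs_of_neg hneg
    rw [habs] at ht
    have hsign : Real.sign y₀ = -1 := Real.sign_of_neg hneg
    rw [hsign, show y₀ - (-1) * t = y₀ + t by ring]
    have hbounds : ∀ k : ℕ, 1 ≤ k →
        -y₀ - t ≤ -(Y k t) ∧ -(Y k t) ≤ -y₀ - t + 5 * Real.sqrt (1 / k) := by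
      intro k hk
      have hkpos : (0 : ℝ) < 1 / k := by
        have : (0:ℝ) < k := by exact_mod_cast hk
        positivity
      apply aux14 (-y₀) (by linarith) (1 / k) hkpos (fun u => -(Y k u))
        (by simp [hY0 k hk])
        (fun u => by simpa [neg_div, Pi.neg_def] using (hODE k hk u).neg) t ht
    apply tendsto_of_tendsto_of_tendsto_of_le_of_le'
      (g := fun k : ℕ => y₀ + t - 5 * Real.sqrt (1 / k)) (h := fun _ : ℕ => y₀ + t)
    · have : Tendsto (fun k : ℕ => y₀ + t - 5 * Real.sqrt (1 / k)) atTop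
          (nhds (y₀ + t - 5 * 0)) := tendsto_const_nhds.sub (hsqrt0.const_mul 5)
      simpa [mul_comm] using this
    · exact tendsto_const_nhds
    · filter_upwards [eventually_ge_atTop 1] with k hk
      have := (hbounds k hk).2
      linarith
    · filter_upwards [eventually_ge_atTop 1] with k hk
      have := (hbounds k hk).1
      linarith
  · -- y₀ > 0
    have habs : |y₀| = y₀ := abs_of_pos hpos
    rw [habs] at ht
    have hsign : Real.sign y₀ = 1 := Real.sign_of_pos hpos
    rw [hsign, show y₀ - 1 * t = y₀ - t by ring]
    have hbounds : ∀ k : ℕ, 1 ≤ k →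
        y₀ - t ≤ Y k t ∧ Y k t ≤ y₀ - t + 5 * Real.sqrt (1 / k) := by
      intro k hk
      have hkpos : (0 : ℝ) < 1 / k := by
        have : (0:ℝ) < k := by exact_mod_cast hk
        positivity
      exact aux14 y₀ hpos (1 / k) hkpos (Y k) (hY0 k hk) (hODE k hk) t ht
    apply tendsto_of_tendsto_of_tendsto_of_le_of_le'
      (g := fun _ : ℕ => y₀ - t) (h := fun k : ℕ => y₀ - t + 5 * Real.sqrt (1 / k))
    · exact tendsto_const_nhds
    · have : Tendsto (fun k : ℕ => y₀ - t + 5 * Real.sqrt (1 / k)) atTop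
          (nhds (y₀ - t + 5 * 0)) := tendsto_const_nhds.add (hsqrt0.const_mul 5)
      simpa [one_mul] using this
    · filter_upwards [eventually_ge_atTop 1] with k hk
      exact (hbounds k hk).1
    · filter_upwards [eventually_ge_atTop 1] with k hk
      exact (hbounds k hk).2
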